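/- Let P be a set of three points forming an equilateral triangle, and let each point be assigned a wedge of angle α < π/3 with apex at that point. Then the induced symmetric communication graph on P is disconnected. -/

import Mathlib

open Real Complex

/-- The wedge (directional-antenna coverage region) with apex `p`, orientation `θ`
and angle `α`. -/
def Wedge (p : ℂ) (θ α : ℝ) : Set ℂ :=
  {x | ∃ r : ℝ, 0 ≤ r ∧ ∃ t ∈ Set.Icc 0 α,
    x = p + (r : ℂ) * Complex.exp ((θ + t : ℝ) * Complex.I)}

lemma wedge_key (p a b : ℂ) (θ α : ℝ) (hα : α < π/3) (hab : a ≠ b)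
    (hd1 : dist a p = dist a b) (hd2 : dist b p = dist a b)
    (ha : a ∈ Wedge p θ α) (hb : b ∈ Wedge p θ α) : False := by
  obtain ⟨r1, hr1, t1, ht1, ha⟩ := ha
  obtain ⟨r2, hr2, t2, ht2, hb⟩ := hb
  set d := dist a b with hdd
  have hdpos : 0 < d := dist_pos.2 hab
  have hap : a - p = (r1 : ℂ) * Complex.exp ((θ + t1 : ℝ) * Complex.I) := by
    rw [ha]; ring
  have hbp : b - p = (r2 : ℂ) * Complex.exp ((θ + t2 : ℝ) * Complex.I) := by
    rw [hb]; ring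
  have h1 : r1 = d := by
    rw [← hd1, Complex.dist_eq, hap, norm_mul, Complex.norm_exp_ofReal_mul_I, mul_one,
      Complex.norm_real, Real.norm_eq_abs, _root_.abs_of_nonneg hr1]
  have h2 : r2 = d := by
    rw [← hd2, Complex.dist_eq, hbp, norm_mul, Complex.norm_exp_ofReal_mul_I, mul_one,
      Complex.norm_real, Real.norm_eq_abs, _root_.abs_of_nonneg hr2]
  set E1 := Complex.exp ((θ + t1 : ℝ) * Complex.I) with hE1
  set E2 := Complex.exp ((θ + t2 : ℝ) * Complex.I) with hE2
  have hab2 : a - b = (d : ℂ) * (E1 - E2) := by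
    have : a - b = (a - p) - (b - p) := by ring
    rw [this, hap, hbp, h1, h2]; ring
  have habs : ‖E1 - E2‖ = 1 := by
    have : d = d * ‖E1 - E2‖ := by
      conv_lhs => rw [hdd, Complex.dist_eq, hab2]
      rw [norm_mul, Complex.norm_real, Real.norm_eq_abs, _root_.abs_of_nonneg hdpos.le]
    exact mul_left_cancel₀ hdpos.ne' (by rw [mul_one]; exact this.symm)
  have hns : Complex.normSq (E1 - E2) = 1 := by
    rw [← Complex.sq_norm, habs]; norm_num
  have hexp : Complex.normSq (E1 - E2) =
      (Real.cos (θ + t1) - Real.cos (θ + t2))^2 +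
      (Real.sin (θ + t1) - Real.sin (θ + t2))^2 := by
    simp only [Complex.normSq_apply, Complex.sub_re, Complex.sub_im, hE1, hE2,
      Complex.exp_ofReal_mul_I_re, Complex.exp_ofReal_mul_I_im]
    ring
  have hcos : Real.cos (t1 - t2) = 1/2 := by
    have hc := Real.cos_sub (θ + t1) (θ + t2)
    have h1' := Real.sin_sq_add_cos_sq (θ + t1)
    have h2' := Real.sin_sq_add_cos_sq (θ + t2)
    have : (θ + t1) - (θ + t2) = t1 - t2 := by ring
    rw [this] at hc
    nlinarith [hns, hexp]
  have htabs : |t1 - t2| < π/3 := by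
    rw [abs_sub_lt_iff]
    obtain ⟨h1a, h1b⟩ := ht1
    obtain ⟨h2a, h2b⟩ := ht2
    constructor <;> linarith
  have : Real.cos (π/3) < Real.cos |t1 - t2| :=
    Real.cos_lt_cos_of_nonneg_of_le_pi (abs_nonneg _)
      (by linarith [Real.pi_pos]) htabs
  rw [Real.cos_pi_div_three, Real.cos_abs, hcos] at this
  linarith

/-- If three points form an equilateral triangle and each is assigned a
wedge of angle α < π/3 apexed at it, then the induced symmetric communication graph is
disconnected. -/
theorem equilateral_triangle_scg_disconnected
    (p : Fin 3 → ℂ) (hinj : Function.Injective p)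
    (heq : dist (p 0) (p 1) = dist (p 1) (p 2) ∧ dist (p 1) (p 2) = dist (p 0) (p 2))
    (α : ℝ) (hα : α < π / 3) (θ : Fin 3 → ℝ) :
    ¬ (SimpleGraph.fromRel (fun i j =>
        p j ∈ Wedge (p i) (θ i) α ∧ p i ∈ Wedge (p j) (θ j) α)).Connected := by
  intro hconn
  set G := SimpleGraph.fromRel (fun i j =>
        p j ∈ Wedge (p i) (θ i) α ∧ p i ∈ Wedge (p j) (θ j) α) with hG
  have hW : ∀ i j, G.Adj i j → p j ∈ Wedge (p i) (θ i) α ∧ p i ∈ Wedge (p j) (θ j) α := by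
    intro i j h
    rw [hG, SimpleGraph.fromRel_adj] at h
    rcases h.2 with ⟨h1, h2⟩ | ⟨h1, h2⟩
    · exact ⟨h1, h2⟩
    · exact ⟨h2, h1⟩
  have hd : ∀ i j : Fin 3, i ≠ j → dist (p i) (p j) = dist (p 0) (p 1) := by
    obtain ⟨he1, he2⟩ := heq
    intro i j hij
    fin_cases i <;> fin_cases j <;> simp_all [dist_comm (p 1) (p 0), dist_comm (p 2) (p 0), dist_comm (p 2) (p 1)]
  have noTwo : ∀ i j k : Fin 3, j ≠ i → k ≠ i → j ≠ k →
      G.Adj i j → G.Adj i k → False := by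
    intro i j k hji hki hjk haj hak
    exact wedge_key (p i) (p j) (p k) (θ i) α hα (hinj.ne hjk)
      (by rw [hd j i hji, hd j k hjk])
      (by rw [hd k i hki, ← hd j k hjk])
      (hW i j haj).1 (hW i k hak).1
  have isolated : ∀ v u : Fin 3, v ≠ u → (∀ w, ¬ G.Adj v w) → ¬ G.Reachable v u := by
    rintro v u hvu hv ⟨w⟩
    cases w with
    | nil => exact hvu rfl
    | cons h _ => exact hv _ h
  by_cases h01 : G.Adj 0 1
  · refine isolated 2 0 (by decide) ?_ (hconn.preconnected 2 0)
    intro w hw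
    fin_cases w
    · exact noTwo 0 1 2 (by decide) (by decide) (by decide) h01 hw.symm
    · exact noTwo 1 0 2 (by decide) (by decide) (by decide) h01.symm hw.symm
    · exact G.irrefl hw
  · by_cases h02 : G.Adj 0 2
    · refine isolated 1 0 (by decide) ?_ (hconn.preconnected 1 0)
      intro w hw
      fin_cases w
      · exact h01 hw.symm
      · exact G.irrefl hw
      · exact noTwo 2 0 1 (by decide) (by decide) (by decide) h02.symm hw.symm
    · refine isolated 0 1 (by decide) ?_ (hconn.preconnected 0 1)
      intro w hw
      fin_cases w
      · exact G.irrefl hw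
      · exact h01 hw
      · exact h02 hw
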